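/- Let n ≥ 3 and let β be a bivariate truncated moment sequence of degree 2n whose moment matrix M(n) is positive semidefinite and p-pure, where p(x,y) = y² − x³ − ax − b and Z(p) = {(x,y) ∈ ℝ² : p(x,y) = 0}. Then β admits a (rank M(n))-atomic Z(p)-representing measure if and only if M(n) admits a flat extension M(n+1). -/

import Mathlib

open MeasureTheory Matrix

noncomputable section

/-- Index type for monomials `x^i y^j` with `i + j ≤ n`. -/
abbrev MIdx (n : ℕ) : Type := {p : Fin (n+1) × Fin (n+1) // (p.1 : ℕ) + (p.2 : ℕ) ≤ n}

/-- The moment matrix `M(n)` of a bivariate truncated moment sequence `β`. -/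
def momentMatrix (n : ℕ) (β : ℕ → ℕ → ℝ) : Matrix (MIdx n) (MIdx n) ℝ :=
  fun p q => β ((p.1.1 : ℕ) + (q.1.1 : ℕ)) ((p.1.2 : ℕ) + (q.1.2 : ℕ))

/-- Coefficient vector (w.r.t. monomials of degree ≤ n) of `x^i y^j * (y² - x³ - a x - b)`. -/
def pureVec (n : ℕ) (a b : ℝ) (i j : ℕ) : MIdx n → ℝ := fun q =>
  (if (q.1.1 : ℕ) = i ∧ (q.1.2 : ℕ) = j + 2 then (1:ℝ) else 0)
    - (if (q.1.1 : ℕ) = i + 3 ∧ (q.1.2 : ℕ) = j then (1:ℝ) else 0)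
    - a * (if (q.1.1 : ℕ) = i + 1 ∧ (q.1.2 : ℕ) = j then (1:ℝ) else 0)
    - b * (if (q.1.1 : ℕ) = i ∧ (q.1.2 : ℕ) = j then (1:ℝ) else 0)

/-- `M(n)` is `p`-pure for `p(x,y) = y² - x³ - a x - b`: the kernel of `M(n)` is spanned by
the coefficient vectors of `x^i y^j p(x,y)`, `i + j ≤ n - 3`. -/
def IsPPure (n : ℕ) (a b : ℝ) (β : ℕ → ℕ → ℝ) : Prop :=
  {v : MIdx n → ℝ | (momentMatrix n β).mulVec v = 0} =
    (Submodule.span ℝ {v : MIdx n → ℝ | ∃ i j : ℕ, i + j + 3 ≤ n ∧ v = pureVec n a b i j} :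
      Set (MIdx n → ℝ))

/-- `μ` is a `K`-representing measure for the degree-`d` truncated moment sequence `β`:
a positive Borel measure on `ℝ²` with `supp μ ⊆ K` (for closed `K`, equivalently
`μ(Kᶜ) = 0`) whose moments of degree ≤ `d` are the `β_{ij}`. -/
def IsRepMeasure (d : ℕ) (β : ℕ → ℕ → ℝ) (K : Set (ℝ × ℝ)) (μ : Measure (ℝ × ℝ)) : Prop :=
  μ Kᶜ = 0 ∧ ∀ i j : ℕ, i + j ≤ d →
    Integrable (fun z : ℝ × ℝ => z.1 ^ i * z.2 ^ j) μ ∧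
    β i j = ∫ z : ℝ × ℝ, z.1 ^ i * z.2 ^ j ∂μ

/-- `μ` is `r`-atomic: a sum of `r` point masses with strictly positive weights at `r`
distinct points. -/
def IsAtomicMeasure (r : ℕ) (μ : Measure (ℝ × ℝ)) : Prop :=
  ∃ (x : Fin r → ℝ × ℝ) (c : Fin r → ℝ), Function.Injective x ∧ (∀ i, 0 < c i) ∧
    μ = ∑ i : Fin r, ENNReal.ofReal (c i) • Measure.dirac (x i)

/-- `M(n)` admits a flat extension `M(n+1)`. -/
def HasFlatExtension (n : ℕ) (β : ℕ → ℕ → ℝ) : Prop :=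
  ∃ β' : ℕ → ℕ → ℝ, (∀ i j : ℕ, i + j ≤ 2*n → β' i j = β i j) ∧
    (momentMatrix (n+1) β').PosSemidef ∧
    (momentMatrix (n+1) β').rank = (momentMatrix n β).rank



def memb (m i j : ℕ) (h : i + j ≤ m) : MIdx m :=
  ⟨(⟨i, by omega⟩, ⟨j, by omega⟩), by simpa using h⟩

@[simp] lemma memb_c1 (m i j h) : ((memb m i j h).1.1 : ℕ) = i := rfl
@[simp] lemma memb_c2 (m i j h) : ((memb m i j h).1.2 : ℕ) = j := rfl

lemma eq_memb_iff {m i j : ℕ} {h : i + j ≤ m} {q : MIdx m} :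
    q = memb m i j h ↔ ((q.1.1 : ℕ) = i ∧ (q.1.2 : ℕ) = j) := by
  constructor
  · rintro rfl; exact ⟨rfl, rfl⟩
  · rintro ⟨h1, h2⟩
    apply Subtype.ext
    apply Prod.ext <;> apply Fin.ext <;> assumption

lemma sum_ite_mul_of_le {m i j : ℕ} (h : i + j ≤ m) (F : MIdx m → ℝ) :
    (∑ q : MIdx m, (if (q.1.1 : ℕ) = i ∧ (q.1.2 : ℕ) = j then (1:ℝ) else 0) * F q)
      = F (memb m i j h) := by
  have : ∀ q : MIdx m,
      (if (q.1.1 : ℕ) = i ∧ (q.1.2 : ℕ) = j then (1:ℝ) else 0) * F q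
        = if q = memb m i j h then F q else 0 := by
    intro q
    by_cases hq : ((q.1.1 : ℕ) = i ∧ (q.1.2 : ℕ) = j)
    · rw [if_pos hq, if_pos (eq_memb_iff.2 hq), one_mul]
    · rw [if_neg hq, if_neg (fun hc => hq (eq_memb_iff.1 hc)), zero_mul]
  rw [Finset.sum_congr rfl (fun q _ => this q), Finset.sum_ite_eq' Finset.univ,
    if_pos (Finset.mem_univ _)]

lemma sum_ite_mul_of_gt {m i j : ℕ} (h : m < i + j) (F : MIdx m → ℝ) :
    (∑ q : MIdx m, (if (q.1.1 : ℕ) = i ∧ (q.1.2 : ℕ) = j then (1:ℝ) else 0) * F q) = 0 := by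
  refine Finset.sum_eq_zero fun q _ => ?_
  have hq := q.2
  rw [if_neg, zero_mul]
  rintro ⟨h1, h2⟩
  omega

/-! ### moment matrix basics -/

lemma dot_mm (m : ℕ) (γ : ℕ → ℕ → ℝ) (u v : MIdx m → ℝ) :
    u ⬝ᵥ (momentMatrix m γ).mulVec v
      = ∑ p : MIdx m, ∑ q : MIdx m,
          u p * v q * γ ((p.1.1 : ℕ) + (q.1.1 : ℕ)) ((p.1.2 : ℕ) + (q.1.2 : ℕ)) := by
  simp only [dotProduct, mulVec, Finset.mul_sum]
  refine Finset.sum_congr rfl fun p _ => Finset.sum_congr rfl fun q _ => ?_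
  simp [momentMatrix]; ring

lemma mm_isHermitian (m : ℕ) (γ : ℕ → ℕ → ℝ) : (momentMatrix m γ).IsHermitian := by
  rw [Matrix.IsHermitian, Matrix.conjTranspose_eq_transpose_of_trivial]
  ext p q
  simp [Matrix.transpose_apply, momentMatrix, Nat.add_comm]

lemma quad_form {m r : ℕ} {γ : ℕ → ℕ → ℝ} {z : Fin r → ℝ × ℝ} {c : Fin r → ℝ}
    (hrep : ∀ s t, s + t ≤ 2*m → γ s t = ∑ k : Fin r, c k * (z k).1 ^ s * (z k).2 ^ t)
    (w : MIdx m → ℝ) :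
    w ⬝ᵥ (momentMatrix m γ).mulVec w
      = ∑ k : Fin r, c k *
          (∑ p : MIdx m, w p * (z k).1 ^ (p.1.1 : ℕ) * (z k).2 ^ (p.1.2 : ℕ))^2 := by
  rw [dot_mm]
  have step : ∀ p q : MIdx m,
      w p * w q * γ ((p.1.1 : ℕ) + (q.1.1 : ℕ)) ((p.1.2 : ℕ) + (q.1.2 : ℕ))
        = ∑ k : Fin r, c k * (w p * (z k).1 ^ (p.1.1 : ℕ) * (z k).2 ^ (p.1.2 : ℕ))
            * (w q * (z k).1 ^ (q.1.1 : ℕ) * (z k).2 ^ (q.1.2 : ℕ)) := by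
    intro p q
    have hb : (p.1.1 : ℕ) + (q.1.1 : ℕ) + ((p.1.2 : ℕ) + (q.1.2 : ℕ)) ≤ 2*m := by
      have := p.2; have := q.2; omega
    rw [hrep _ _ hb, Finset.mul_sum]
    refine Finset.sum_congr rfl fun k _ => ?_
    rw [pow_add, pow_add]; ring
  rw [Finset.sum_congr rfl fun p _ => Finset.sum_congr rfl fun q _ => step p q]
  rw [Finset.sum_congr rfl fun p (_ : p ∈ Finset.univ) => Finset.sum_comm]
  rw [Finset.sum_comm]
  refine Finset.sum_congr rfl fun k _ => ?_
  rw [sq, Finset.sum_mul_sum, Finset.mul_sum]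
  refine Finset.sum_congr rfl fun p _ => ?_
  rw [Finset.mul_sum]
  exact Finset.sum_congr rfl fun q _ => by ring

lemma psd_atomic {m r : ℕ} {γ : ℕ → ℕ → ℝ} {z : Fin r → ℝ × ℝ} {c : Fin r → ℝ}
    (hc : ∀ k, 0 ≤ c k)
    (hrep : ∀ s t, s + t ≤ 2*m → γ s t = ∑ k : Fin r, c k * (z k).1 ^ s * (z k).2 ^ t) :
    (momentMatrix m γ).PosSemidef := by
  refine Matrix.posSemidef_iff_dotProduct_mulVec.2 ⟨mm_isHermitian m γ, fun w => ?_⟩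
  have : star w = w := by funext i; exact star_trivial _
  rw [this, quad_form hrep w]
  exact Finset.sum_nonneg fun k _ => mul_nonneg (hc k) (sq_nonneg _)

/-! ### rank lemmas -/

def incl (n : ℕ) : MIdx n → MIdx (n+1) := fun p =>
  memb (n+1) (p.1.1 : ℕ) (p.1.2 : ℕ) (by have := p.2; omega)

def selMat (n : ℕ) : Matrix (MIdx n) (MIdx (n+1)) ℝ := fun p q => if q = incl n p then 1 else 0

lemma low_eq_mul (n : ℕ) (β β' : ℕ → ℕ → ℝ) (hag : ∀ i j, i + j ≤ 2*n → β' i j = β i j) :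
    momentMatrix n β = selMat n * momentMatrix (n+1) β' * (selMat n)ᵀ := by
  ext p q
  rw [Matrix.mul_apply]
  have h1 : ∀ t, (selMat n * momentMatrix (n+1) β') p t = momentMatrix (n+1) β' (incl n p) t := by
    intro t
    rw [Matrix.mul_apply]
    have : ∀ s, selMat n p s * momentMatrix (n+1) β' s t
        = if s = incl n p then momentMatrix (n+1) β' s t else 0 := by
      intro s; by_cases hs : s = incl n p <;> simp [selMat, hs]
    rw [Finset.sum_congr rfl fun s _ => this s, Finset.sum_ite_eq' Finset.univ,
      if_pos (Finset.mem_univ _)]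
  have : ∀ t, (selMat n * momentMatrix (n+1) β') p t * (selMat n)ᵀ t q
      = if t = incl n q then momentMatrix (n+1) β' (incl n p) t else 0 := by
    intro t
    rw [h1, Matrix.transpose_apply]
    by_cases ht : t = incl n q <;> simp [selMat, ht]
  rw [Finset.sum_congr rfl fun t _ => this t, Finset.sum_ite_eq' Finset.univ,
    if_pos (Finset.mem_univ _)]
  show β _ _ = β' _ _
  rw [hag]
  · rfl
  · have := p.2; have := q.2
    simp only [incl, memb_c1, memb_c2]
    omega

lemma rank_le_of_agree (n : ℕ) (β β' : ℕ → ℕ → ℝ) (hag : ∀ i j, i + j ≤ 2*n → β' i j = β i j) :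
    (momentMatrix n β).rank ≤ (momentMatrix (n+1) β').rank := by
  rw [low_eq_mul n β β' hag]
  exact le_trans (Matrix.rank_mul_le_left _ _) (Matrix.rank_mul_le_right _ _)

lemma rank_atomic_le {m r : ℕ} {γ : ℕ → ℕ → ℝ} {z : Fin r → ℝ × ℝ} {c : Fin r → ℝ}
    (hc : ∀ k, 0 ≤ c k)
    (hrep : ∀ s t, γ s t = ∑ k : Fin r, c k * (z k).1 ^ s * (z k).2 ^ t) :
    (momentMatrix m γ).rank ≤ r := by
  set F : Matrix (Fin r) (MIdx m) ℝ :=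
    Matrix.of fun k p => Real.sqrt (c k) * (z k).1 ^ (p.1.1 : ℕ) * (z k).2 ^ (p.1.2 : ℕ) with hF
  have : momentMatrix m γ = Fᵀ * F := by
    ext p q
    rw [Matrix.mul_apply]
    show γ _ _ = _
    rw [hrep]
    refine Finset.sum_congr rfl fun k _ => ?_
    rw [Matrix.transpose_apply]
    show _ = (Real.sqrt (c k) * _ * _) * (Real.sqrt (c k) * _ * _)
    rw [pow_add, pow_add]
    have h2 : Real.sqrt (c k) * Real.sqrt (c k) = c k := Real.mul_self_sqrt (hc k)
    linear_combination (-(z k).1 ^ ((p.1.1:Fin (m+1)) : ℕ) * (z k).1 ^ ((q.1.1:Fin (m+1)) : ℕ) *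
      (z k).2 ^ ((p.1.2:Fin (m+1)) : ℕ) * (z k).2 ^ ((q.1.2:Fin (m+1)) : ℕ)) * h2
  rw [this]
  exact le_trans (Matrix.rank_mul_le_right _ _)
    (le_trans (Matrix.rank_le_card_height F) (by simp))

/-! ### atomic measure integrals -/

lemma atomic_integrable {r : ℕ} (z : Fin r → ℝ × ℝ) (c : Fin r → ℝ)
    {f : ℝ × ℝ → ℝ} (hf : Measurable f) :
    Integrable f (∑ k : Fin r, ENNReal.ofReal (c k) • Measure.dirac (z k)) := by
  rw [MeasureTheory.integrable_finset_sum_measure]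
  intro i _
  refine Integrable.smul_measure ?_ ENNReal.ofReal_ne_top
  refine ⟨hf.aestronglyMeasurable, ?_⟩
  simp [MeasureTheory.HasFiniteIntegral, MeasureTheory.lintegral_dirac]

lemma atomic_integral {r : ℕ} (z : Fin r → ℝ × ℝ) (c : Fin r → ℝ) (hc : ∀ k, 0 ≤ c k)
    {f : ℝ × ℝ → ℝ} (hf : Measurable f) :
    ∫ w, f w ∂(∑ k : Fin r, ENNReal.ofReal (c k) • Measure.dirac (z k))
      = ∑ k : Fin r, c k * f (z k) := by
  rw [MeasureTheory.integral_finset_sum_measure]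
  · refine Finset.sum_congr rfl fun k _ => ?_
    rw [MeasureTheory.integral_smul_measure, MeasureTheory.integral_dirac,
      ENNReal.toReal_ofReal (hc k), smul_eq_mul]
  · intro i _
    refine Integrable.smul_measure ?_ ENNReal.ofReal_ne_top
    refine ⟨hf.aestronglyMeasurable, ?_⟩
    simp [MeasureTheory.HasFiniteIntegral, MeasureTheory.lintegral_dirac]

lemma atomic_compl {r : ℕ} (z : Fin r → ℝ × ℝ) (c : Fin r → ℝ) {K : Set (ℝ × ℝ)}
    (hK : MeasurableSet K) (hz : ∀ k, z k ∈ K) :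
    (∑ k : Fin r, ENNReal.ofReal (c k) • Measure.dirac (z k)) Kᶜ = 0 := by
  rw [MeasureTheory.Measure.finset_sum_apply]
  refine Finset.sum_eq_zero fun k _ => ?_
  rw [MeasureTheory.Measure.smul_apply, MeasureTheory.Measure.dirac_apply' _ hK.compl,
    Set.indicator_of_notMem (by simp [hz k])]
  simp



lemma dot_mm_symm (m : ℕ) (γ : ℕ → ℕ → ℝ) (u v : MIdx m → ℝ) :
    u ⬝ᵥ (momentMatrix m γ).mulVec v = v ⬝ᵥ (momentMatrix m γ).mulVec u := by
  rw [dot_mm, dot_mm, Finset.sum_comm]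
  refine Finset.sum_congr rfl fun p _ => Finset.sum_congr rfl fun q _ => ?_
  rw [Nat.add_comm ((q.1.1 : ℕ)) ((p.1.1 : ℕ)), Nat.add_comm ((q.1.2 : ℕ)) ((p.1.2 : ℕ))]
  ring

def lowDeg (n : ℕ) : Submodule ℝ (MIdx (n+1) → ℝ) where
  carrier := {f | ∀ q : MIdx (n+1), (q.1.1 : ℕ) + (q.1.2 : ℕ) = n+1 → f q = 0}
  add_mem' := fun hf hg q hq => by simp only [Pi.add_apply, hf q hq, hg q hq, add_zero]
  zero_mem' := fun q _ => rfl
  smul_mem' := fun c f hf q hq => by simp only [Pi.smul_apply, hf q hq, smul_zero]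

lemma lowDeg_bound {n : ℕ} {g : MIdx (n+1) → ℝ} (hg : g ∈ lowDeg n) {dx dy : ℕ}
    (hd : dx + dy ≤ 1) :
    ∀ q : MIdx (n+1), g q ≠ 0 → (q.1.1 : ℕ) + (q.1.2 : ℕ) + dx + dy ≤ n+1 := by
  intro q hq
  have h2 := q.2
  by_contra hlt
  exact hq (hg q (by omega))

def shiftM (n dx dy : ℕ) : Matrix (MIdx (n+1)) (MIdx (n+1)) ℝ :=
  fun q p => if (q.1.1 : ℕ) = (p.1.1 : ℕ) + dx ∧ (q.1.2 : ℕ) = (p.1.2 : ℕ) + dy then 1 else 0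

lemma shift_expand (n dx dy : ℕ) (γ : ℕ → ℕ → ℝ) (h g : MIdx (n+1) → ℝ)
    (hg : ∀ q : MIdx (n+1), g q ≠ 0 → (q.1.1 : ℕ) + (q.1.2 : ℕ) + dx + dy ≤ n+1) :
    h ⬝ᵥ (momentMatrix (n+1) γ).mulVec ((shiftM n dx dy).mulVec g)
      = ∑ p : MIdx (n+1), ∑ q : MIdx (n+1),
          h p * g q * γ ((p.1.1 : ℕ) + (q.1.1 : ℕ) + dx) ((p.1.2 : ℕ) + (q.1.2 : ℕ) + dy) := by
  rw [dot_mm]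
  refine Finset.sum_congr rfl fun p _ => ?_
  have expand : ∀ s : MIdx (n+1),
      h p * ((shiftM n dx dy).mulVec g) s * γ ((p.1.1:ℕ)+(s.1.1:ℕ)) ((p.1.2:ℕ)+(s.1.2:ℕ))
        = ∑ q : MIdx (n+1),
            (if (s.1.1:ℕ) = (q.1.1:ℕ)+dx ∧ (s.1.2:ℕ) = (q.1.2:ℕ)+dy then (1:ℝ) else 0) *
              (h p * g q * γ ((p.1.1:ℕ)+(s.1.1:ℕ)) ((p.1.2:ℕ)+(s.1.2:ℕ))) := by
    intro s
    rw [mulVec, dotProduct]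
    rw [Finset.mul_sum, Finset.sum_mul]
    refine Finset.sum_congr rfl fun q _ => ?_
    show h p * (shiftM n dx dy s q * g q) * _ = _
    rw [shiftM]
    ring
  rw [Finset.sum_congr rfl fun s _ => expand s, Finset.sum_comm]
  refine Finset.sum_congr rfl fun q _ => ?_
  -- inner sum over s of indicator * F s
  by_cases hq : (q.1.1:ℕ) + dx + ((q.1.2:ℕ) + dy) ≤ n+1
  · rw [sum_ite_mul_of_le hq (fun s => h p * g q * γ ((p.1.1:ℕ)+(s.1.1:ℕ)) ((p.1.2:ℕ)+(s.1.2:ℕ)))]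
    simp only [memb_c1, memb_c2]
    rw [← Nat.add_assoc, ← Nat.add_assoc]
  · rw [sum_ite_mul_of_gt (by omega) (fun s => h p * g q * γ ((p.1.1:ℕ)+(s.1.1:ℕ)) ((p.1.2:ℕ)+(s.1.2:ℕ)))]
    have : g q = 0 := by
      by_contra hgq
      exact hq (by have := hg q hgq; omega)
    rw [this]
    ring
lemma transfer (n dx dy : ℕ) (γ : ℕ → ℕ → ℝ) (f g : MIdx (n+1) → ℝ)
    (hf : f ∈ lowDeg n) (hg : g ∈ lowDeg n) (hd : dx + dy = 1) :
    ((shiftM n dx dy).mulVec f) ⬝ᵥ (momentMatrix (n+1) γ).mulVec g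
      = f ⬝ᵥ (momentMatrix (n+1) γ).mulVec ((shiftM n dx dy).mulVec g) := by
  rw [dot_mm_symm, shift_expand n dx dy γ g f (lowDeg_bound hf (le_of_eq hd)),
    shift_expand n dx dy γ f g (lowDeg_bound hg (le_of_eq hd)), Finset.sum_comm]
  refine Finset.sum_congr rfl fun p _ => Finset.sum_congr rfl fun q _ => ?_
  rw [Nat.add_comm ((q.1.1 : ℕ)) ((p.1.1 : ℕ)), Nat.add_comm ((q.1.2 : ℕ)) ((p.1.2 : ℕ))]
  ring

lemma shift_expand2 (n dx dy dx' dy' : ℕ) (γ : ℕ → ℕ → ℝ) (f g : MIdx (n+1) → ℝ)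
    (hf : f ∈ lowDeg n) (hg : g ∈ lowDeg n) (hd : dx + dy ≤ 1) (hd' : dx' + dy' ≤ 1) :
    ((shiftM n dx dy).mulVec f) ⬝ᵥ (momentMatrix (n+1) γ).mulVec ((shiftM n dx' dy').mulVec g)
      = ∑ p : MIdx (n+1), ∑ q : MIdx (n+1),
          f p * g q * γ ((p.1.1 : ℕ) + (q.1.1 : ℕ) + dx + dx')
            ((p.1.2 : ℕ) + (q.1.2 : ℕ) + dy + dy') := by
  rw [shift_expand n dx' dy' γ _ g (lowDeg_bound hg hd')]
  rw [Finset.sum_comm]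
  have expand : ∀ q p' : MIdx (n+1), ∀ C : MIdx (n+1) → ℝ,
      ((shiftM n dx dy).mulVec f) p' * g q * C p'
        = ∑ p : MIdx (n+1),
            (if (p'.1.1:ℕ) = (p.1.1:ℕ)+dx ∧ (p'.1.2:ℕ) = (p.1.2:ℕ)+dy then (1:ℝ) else 0) *
              (f p * g q * C p') := by
    intro q p' C
    rw [mulVec, dotProduct, Finset.sum_mul, Finset.sum_mul]
    refine Finset.sum_congr rfl fun p _ => ?_
    show shiftM n dx dy p' p * f p * g q * C p' = _
    rw [shiftM]
    ring
  calc ∑ q : MIdx (n+1), ∑ p' : MIdx (n+1), ((shiftM n dx dy).mulVec f) p' * g q *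
          γ ((p'.1.1:ℕ)+(q.1.1:ℕ)+dx') ((p'.1.2:ℕ)+(q.1.2:ℕ)+dy')
      = ∑ q : MIdx (n+1), ∑ p : MIdx (n+1), f p * g q *
          γ ((p.1.1:ℕ)+(q.1.1:ℕ)+dx+dx') ((p.1.2:ℕ)+(q.1.2:ℕ)+dy+dy') := by
        refine Finset.sum_congr rfl fun q _ => ?_
        rw [Finset.sum_congr rfl fun p' (_ : p' ∈ Finset.univ) => expand q p'
          (fun s => γ ((s.1.1:ℕ)+(q.1.1:ℕ)+dx') ((s.1.2:ℕ)+(q.1.2:ℕ)+dy')), Finset.sum_comm]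
        refine Finset.sum_congr rfl fun p _ => ?_
        by_cases hp : (p.1.1:ℕ) + dx + ((p.1.2:ℕ) + dy) ≤ n+1
        · rw [sum_ite_mul_of_le hp]
          simp only [memb_c1, memb_c2]
          congr 2
          · omega
          · omega
        · rw [sum_ite_mul_of_gt (by omega)]
          have : f p = 0 := by
            by_contra hfp
            exact hp (by have := lowDeg_bound hf (by omega : dx + dy ≤ 1) p hfp; omega)
          rw [this]
          ring
    _ = _ := Finset.sum_comm

lemma memb_coords (m : ℕ) (q : MIdx m) (h : (q.1.1 : ℕ) + (q.1.2 : ℕ) ≤ m) :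
    memb m (q.1.1 : ℕ) (q.1.2 : ℕ) h = q := by
  apply Subtype.ext; apply Prod.ext <;> apply Fin.ext <;> rfl

lemma incl_coords (n : ℕ) (q : MIdx (n+1)) (hq : (q.1.1 : ℕ) + (q.1.2 : ℕ) ≤ n) :
    incl n (memb n (q.1.1 : ℕ) (q.1.2 : ℕ) hq) = q := by
  apply Subtype.ext; apply Prod.ext <;> apply Fin.ext <;> rfl

lemma sum_incl (n : ℕ) (F : MIdx (n+1) → ℝ)
    (h0 : ∀ q : MIdx (n+1), (q.1.1 : ℕ) + (q.1.2 : ℕ) = n+1 → F q = 0) :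
    ∑ q : MIdx (n+1), F q = ∑ p : MIdx n, F (incl n p) := by
  classical
  have hsub : ∑ q ∈ Finset.univ.filter
      (fun q : MIdx (n+1) => (q.1.1 : ℕ) + (q.1.2 : ℕ) ≤ n), F q = ∑ q : MIdx (n+1), F q := by
    refine Finset.sum_subset (Finset.filter_subset _ _) fun q _ hq => ?_
    refine h0 q ?_
    have h2 := q.2
    simp only [Finset.mem_filter, Finset.mem_univ, true_and] at hq
    omega
  rw [← hsub]
  refine Finset.sum_nbij' (fun q => if h : (q.1.1 : ℕ) + (q.1.2 : ℕ) ≤ n then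
      memb n (q.1.1 : ℕ) (q.1.2 : ℕ) h else memb n 0 0 (Nat.zero_le n)) (incl n) ?_ ?_ ?_ ?_ ?_
  · intro q _; exact Finset.mem_univ _
  · intro p _
    simp only [Finset.mem_filter, Finset.mem_univ, true_and, incl, memb_c1, memb_c2]
    exact p.2
  · intro q hq
    simp only [Finset.mem_filter, Finset.mem_univ, true_and] at hq
    simp only [dif_pos hq]
    exact incl_coords n q hq
  · intro p _
    have hp : ((incl n p).1.1 : ℕ) + ((incl n p).1.2 : ℕ) ≤ n := by
      simp only [incl, memb_c1, memb_c2]; exact p.2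
    simp only [dif_pos hp]
    exact memb_coords n p hp
  · intro q hq
    simp only [Finset.mem_filter, Finset.mem_univ, true_and] at hq
    simp only [dif_pos hq]
    rw [incl_coords n q hq]

def ext0 (n : ℕ) (v : MIdx n → ℝ) : MIdx (n+1) → ℝ := fun q =>
  if h : (q.1.1 : ℕ) + (q.1.2 : ℕ) ≤ n then v (memb n (q.1.1 : ℕ) (q.1.2 : ℕ) h) else 0

lemma ext0_mem (n : ℕ) (v : MIdx n → ℝ) : ext0 n v ∈ lowDeg n := by
  intro q hq
  simp only [ext0]
  rw [dif_neg (by omega)]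

lemma ext0_incl (n : ℕ) (v : MIdx n → ℝ) (p : MIdx n) : ext0 n v (incl n p) = v p := by
  have hp : ((incl n p).1.1 : ℕ) + ((incl n p).1.2 : ℕ) ≤ n := by
    simp only [incl, memb_c1, memb_c2]; exact p.2
  simp only [ext0]
  rw [dif_pos hp]
  exact congrArg v (memb_coords n p hp)

lemma flat_key (n : ℕ) (β β' : ℕ → ℕ → ℝ) (hag : ∀ i j, i + j ≤ 2*n → β' i j = β i j)
    (v : MIdx n → ℝ) :
    (LinearMap.funLeft ℝ ℝ (incl n)) ((momentMatrix (n+1) β').mulVecLin (ext0 n v))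
      = (momentMatrix n β).mulVecLin v := by
  funext p
  simp only [LinearMap.funLeft_apply, Matrix.mulVecLin_apply]
  simp only [Matrix.mulVec, dotProduct]
  rw [sum_incl n (fun q => momentMatrix (n+1) β' (incl n p) q * ext0 n v q)
    (fun q hq => by simp only [ext0]; rw [dif_neg (by omega), mul_zero])]
  refine Finset.sum_congr rfl fun q _ => ?_
  rw [ext0_incl]
  congr 1
  show β' _ _ = β _ _
  have h1 : ((incl n p).1.1 : ℕ) = (p.1.1 : ℕ) := rfl
  have h2 : ((incl n p).1.2 : ℕ) = (p.1.2 : ℕ) := rfl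
  have h3 : ((incl n q).1.1 : ℕ) = (q.1.1 : ℕ) := rfl
  have h4 : ((incl n q).1.2 : ℕ) = (q.1.2 : ℕ) := rfl
  rw [h1, h2, h3, h4, hag]
  have := p.2; have := q.2; omega

lemma flat_surj (n : ℕ) (β β' : ℕ → ℕ → ℝ) (hag : ∀ i j, i + j ≤ 2*n → β' i j = β i j)
    (hrank : (momentMatrix (n+1) β').rank = (momentMatrix n β).rank) :
    ∀ u : MIdx (n+1) → ℝ, ∃ f ∈ lowDeg n,
      (momentMatrix (n+1) β').mulVec f = (momentMatrix (n+1) β').mulVec u := by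
  set L := (momentMatrix (n+1) β').mulVecLin with hL
  set K := Submodule.map L (lowDeg n) with hK
  have hKle : K ≤ LinearMap.range L := by
    rintro _ ⟨f, _, rfl⟩
    exact ⟨f, rfl⟩
  have h1 : LinearMap.range (momentMatrix n β).mulVecLin
      ≤ Submodule.map (LinearMap.funLeft ℝ ℝ (incl n)) K := by
    rintro _ ⟨v, rfl⟩
    exact ⟨L (ext0 n v), ⟨ext0 n v, ext0_mem n v, rfl⟩, flat_key n β β' hag v⟩
  have h2 : (momentMatrix n β).rank ≤ Module.finrank ℝ ↥K :=
    le_trans (Submodule.finrank_mono h1) (Submodule.finrank_map_le _ _)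
  have h3 : Module.finrank ℝ ↥K ≤ (momentMatrix (n+1) β').rank :=
    Submodule.finrank_mono hKle
  have hKeq : K = LinearMap.range L :=
    Submodule.eq_of_le_of_finrank_le hKle (by
      have h4 : (momentMatrix (n+1) β').rank = Module.finrank ℝ ↥(LinearMap.range L) := rfl
      show Module.finrank ℝ ↥(LinearMap.range L) ≤ _
      omega)
  intro u
  have : L u ∈ K := hKeq ▸ LinearMap.mem_range_self L u
  rcases this with ⟨f, hf, hfe⟩
  exact ⟨f, hf, hfe⟩

lemma single_dot (m : ℕ) (p : MIdx m) (v : MIdx m → ℝ) :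
    (Pi.single p (1:ℝ) : MIdx m → ℝ) ⬝ᵥ v = v p := by
  rw [dotProduct]
  have : ∀ q : MIdx m, (Pi.single p (1:ℝ) : MIdx m → ℝ) q * v q = if q = p then v q else 0 := by
    intro q
    rw [Pi.single_apply]
    by_cases hq : q = p <;> simp [hq]
  rw [Finset.sum_congr rfl fun q _ => this q, Finset.sum_ite_eq' Finset.univ,
    if_pos (Finset.mem_univ _)]

lemma rec_gen (n : ℕ) (β β' : ℕ → ℕ → ℝ) (hag : ∀ i j, i + j ≤ 2*n → β' i j = β i j)
    (hrank : (momentMatrix (n+1) β').rank = (momentMatrix n β).rank)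
    (dx dy : ℕ) (hd : dx + dy = 1) (f : MIdx (n+1) → ℝ) (hf : f ∈ lowDeg n)
    (h0 : (momentMatrix (n+1) β').mulVec f = 0) :
    (momentMatrix (n+1) β').mulVec ((shiftM n dx dy).mulVec f) = 0 := by
  set M := momentMatrix (n+1) β' with hM
  have hall : ∀ u, u ⬝ᵥ M.mulVec ((shiftM n dx dy).mulVec f) = 0 := by
    intro u
    obtain ⟨g, hg, hgu⟩ := flat_surj n β β' hag hrank u
    have e1 : u ⬝ᵥ M.mulVec ((shiftM n dx dy).mulVec f)
        = g ⬝ᵥ M.mulVec ((shiftM n dx dy).mulVec f) := by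
      rw [dot_mm_symm, ← hgu, ← dot_mm_symm]
    rw [e1, ← transfer n dx dy β' g f hg hf hd, h0, dotProduct_zero]
  funext p
  have := hall (Pi.single p (1:ℝ))
  rw [single_dot] at this
  exact this

lemma split2 (n s t : ℕ) (h : s + t ≤ 2*n) :
    ∃ s1 t1 s2 t2, s = s1 + s2 ∧ t = t1 + t2 ∧ s1 + t1 ≤ n ∧ s2 + t2 ≤ n := by
  rcases le_or_gt s n with hs | hs
  · rcases le_or_gt t (n - s) with ht | ht
    · exact ⟨s, t, 0, 0, by omega, by omega, by omega, by omega⟩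
    · exact ⟨s, n - s, 0, t - (n - s), by omega, by omega, by omega, by omega⟩
  · exact ⟨n, 0, s - n, t, by omega, by omega, by omega, by omega⟩

set_option maxHeartbeats 1000000 in
lemma flat_rep (n : ℕ) (β β' : ℕ → ℕ → ℝ)
    (hag : ∀ i j, i + j ≤ 2*n → β' i j = β i j)
    (hpsd' : (momentMatrix (n+1) β').PosSemidef)
    (hrank : (momentMatrix (n+1) β').rank = (momentMatrix n β).rank) :
    ∃ (z : Fin ((momentMatrix n β).rank) → ℝ × ℝ) (c : Fin ((momentMatrix n β).rank) → ℝ),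
      Function.Injective z ∧ (∀ k, 0 < c k) ∧
      ∀ s t, s + t ≤ 2*n → β s t = ∑ k, c k * (z k).1 ^ s * (z k).2 ^ t := by
  classical
  set M := momentMatrix (n+1) β' with hM
  obtain ⟨A, hA⟩ : ∃ A : Matrix (MIdx (n+1)) (MIdx (n+1)) ℝ, M = Aᴴ * A := by
    open MatrixOrder in
    exact CStarAlgebra.nonneg_iff_eq_star_mul_self.mp hpsd'.nonneg
  rw [Matrix.conjTranspose_eq_transpose_of_trivial] at hA
  have hA' : momentMatrix (n+1) β' = Aᵀ * A := hA
  have hMf : ∀ f g, (A.mulVec f) ⬝ᵥ (A.mulVec g) = f ⬝ᵥ M.mulVec g := by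
    intro f g
    rw [hA, ← Matrix.mulVec_mulVec]
    conv_rhs => rw [dotProduct_mulVec, Matrix.vecMul_transpose]
  have hkerAM : ∀ f, A.mulVec f = 0 ↔ M.mulVec f = 0 := by
    intro f
    constructor
    · intro h
      rw [hA, ← Matrix.mulVec_mulVec, h, Matrix.mulVec_zero]
    · intro h
      have h2 : (A.mulVec f) ⬝ᵥ (A.mulVec f) = 0 := by rw [hMf, h, dotProduct_zero]
      exact dotProduct_self_eq_zero.1 h2
  let ι : (MIdx (n+1) → ℝ) →ₗ[ℝ] EuclideanSpace ℝ (MIdx (n+1)) :=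
    (WithLp.linearEquiv 2 ℝ _).symm.toLinearMap ∘ₗ A.mulVecLin
  have hι_inner : ∀ f g, (inner ℝ (ι f) (ι g) : ℝ) = f ⬝ᵥ M.mulVec g := by
    intro f g
    rw [← hMf, PiLp.inner_apply]
    simp only [RCLike.inner_apply, conj_trivial]
    exact Finset.sum_congr rfl fun _ _ => mul_comm _ _
  have hι0 : ∀ f, ι f = 0 ↔ M.mulVec f = 0 := by
    intro f
    have h1 : ι f = (WithLp.linearEquiv 2 ℝ _).symm (A.mulVec f) := rfl
    rw [h1, LinearEquiv.map_eq_zero_iff]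
    exact hkerAM f
  set E := LinearMap.range ι with hE
  let ψ : ↥(lowDeg n) →ₗ[ℝ] ↥E := LinearMap.codRestrict E (ι ∘ₗ (lowDeg n).subtype)
    (fun s => ⟨↑s, rfl⟩)
  let φ : ℕ → ℕ → (↥(lowDeg n) →ₗ[ℝ] ↥E) := fun dx dy => LinearMap.codRestrict E
    (ι ∘ₗ (shiftM n dx dy).mulVecLin ∘ₗ (lowDeg n).subtype) (fun s => ⟨_, rfl⟩)
  have hψcoe : ∀ s, ((ψ s : ↥E) : EuclideanSpace ℝ (MIdx (n+1))) = ι ↑s := fun s => rfl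
  have hφcoe : ∀ dx dy s, ((φ dx dy s : ↥E) : EuclideanSpace ℝ (MIdx (n+1)))
      = ι ((shiftM n dx dy).mulVec ↑s) := fun _ _ _ => rfl
  have hψsurj : Function.Surjective ψ := by
    rintro ⟨_, u, rfl⟩
    obtain ⟨f, hf, hfe⟩ := flat_surj n β β' hag hrank u
    refine ⟨⟨f, hf⟩, ?_⟩
    apply Subtype.ext
    show ι f = ι u
    have h1 : M.mulVec (f - u) = 0 := by rw [Matrix.mulVec_sub, hfe, sub_self]
    have h2 := (hι0 _).2 h1
    rw [map_sub] at h2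
    exact sub_eq_zero.1 h2
  have hkerφ : ∀ dx dy, dx + dy = 1 → LinearMap.ker ψ ≤ LinearMap.ker (φ dx dy) := by
    intro dx dy hd s hs
    rw [LinearMap.mem_ker] at hs ⊢
    have h1 : ι ↑s = 0 := by rw [← hψcoe s, hs]; rfl
    have h2 : M.mulVec ↑s = 0 := (hι0 _).1 h1
    have h3 := rec_gen n β β' hag hrank dx dy hd ↑s s.2 h2
    apply Subtype.ext
    rw [hφcoe]
    exact (hι0 _).2 h3
  let e := LinearMap.quotKerEquivOfSurjective ψ hψsurj
  let Xop : ↥E →ₗ[ℝ] ↥E :=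
    ((LinearMap.ker ψ).liftQ (φ 1 0) (hkerφ 1 0 rfl)) ∘ₗ e.symm.toLinearMap
  let Yop : ↥E →ₗ[ℝ] ↥E :=
    ((LinearMap.ker ψ).liftQ (φ 0 1) (hkerφ 0 1 rfl)) ∘ₗ e.symm.toLinearMap
  have he_mk : ∀ s, e (Submodule.Quotient.mk s) = ψ s := by
    intro s
    show (LinearMap.quotKerEquivOfSurjective ψ hψsurj) _ = _
    apply Subtype.ext
    simp [LinearMap.quotKerEquivOfSurjective, LinearEquiv.trans_apply,
      LinearEquiv.ofTop_apply, LinearMap.quotKerEquivRange_apply_mk]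
  have hXψ : ∀ s, Xop (ψ s) = φ 1 0 s := by
    intro s
    show ((LinearMap.ker ψ).liftQ (φ 1 0) (hkerφ 1 0 rfl)) (e.symm (ψ s)) = _
    rw [← he_mk s, LinearEquiv.symm_apply_apply, Submodule.liftQ_apply]
  have hYψ : ∀ s, Yop (ψ s) = φ 0 1 s := by
    intro s
    show ((LinearMap.ker ψ).liftQ (φ 0 1) (hkerφ 0 1 rfl)) (e.symm (ψ s)) = _
    rw [← he_mk s, LinearEquiv.symm_apply_apply, Submodule.liftQ_apply]
  have hsymφ : ∀ dx dy (hd : dx + dy = 1) (s t : ↥(lowDeg n)),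
      (inner ℝ (φ dx dy s) (ψ t) : ℝ) = inner ℝ (ψ s) (φ dx dy t) := by
    intro dx dy hd s t
    rw [Submodule.coe_inner, Submodule.coe_inner, hφcoe, hψcoe, hψcoe, hφcoe,
      hι_inner, hι_inner]
    exact transfer n dx dy β' ↑s ↑t s.2 t.2 hd
  have hXsym : Xop.IsSymmetric := by
    intro u v
    obtain ⟨s, rfl⟩ := hψsurj u
    obtain ⟨t, rfl⟩ := hψsurj v
    rw [hXψ, hXψ]
    exact hsymφ 1 0 rfl s t
  have hYsym : Yop.IsSymmetric := by
    intro u v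
    obtain ⟨s, rfl⟩ := hψsurj u
    obtain ⟨t, rfl⟩ := hψsurj v
    rw [hYψ, hYψ]
    exact hsymφ 0 1 rfl s t
  have hkey : ∀ (dx dy dx' dy' : ℕ), dx + dy = 1 → dx' + dy' = 1 →
      ∀ (s t h' : ↥(lowDeg n)), ι ↑h' = ι ((shiftM n dx dy).mulVec ↑s) →
      ((shiftM n dx' dy').mulVec ↑h') ⬝ᵥ M.mulVec ↑t
        = ∑ p : MIdx (n+1), ∑ q : MIdx (n+1), (↑s : MIdx (n+1) → ℝ) p * (↑t : MIdx (n+1) → ℝ) q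
            * β' ((p.1.1:ℕ)+(q.1.1:ℕ)+dx+dx') ((p.1.2:ℕ)+(q.1.2:ℕ)+dy+dy') := by
    intro dx dy dx' dy' hd hd' s t h' he'
    rw [transfer n dx' dy' β' ↑h' ↑t h'.2 t.2 hd']
    rw [← hι_inner, he', hι_inner]
    exact shift_expand2 n dx dy dx' dy' β' ↑s ↑t s.2 t.2 (le_of_eq hd) (le_of_eq hd')
  have hcomm_inner : ∀ s t : ↥(lowDeg n),
      (inner ℝ (Xop (Yop (ψ s))) (ψ t) : ℝ) = inner ℝ (Yop (Xop (ψ s))) (ψ t) := by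
    intro s t
    obtain ⟨h1, hh1⟩ := hψsurj (Yop (ψ s))
    obtain ⟨h2, hh2⟩ := hψsurj (Xop (ψ s))
    rw [← hh1, ← hh2, hXψ, hYψ]
    rw [Submodule.coe_inner, Submodule.coe_inner, hφcoe, hφcoe, hψcoe, hι_inner, hι_inner]
    have e1 : ι ↑h1 = ι ((shiftM n 0 1).mulVec ↑s) := by
      rw [← hψcoe h1, ← hφcoe 0 1 s, hh1, hYψ]
    have e2 : ι ↑h2 = ι ((shiftM n 1 0).mulVec ↑s) := by
      rw [← hψcoe h2, ← hφcoe 1 0 s, hh2, hXψ]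
    rw [hkey 0 1 1 0 rfl rfl s t h1 e1, hkey 1 0 0 1 rfl rfl s t h2 e2]
  have hcomm : Commute Xop Yop := by
    apply LinearMap.ext
    intro u
    obtain ⟨s, rfl⟩ := hψsurj u
    apply ext_inner_right ℝ
    intro v
    obtain ⟨t, rfl⟩ := hψsurj v
    rw [Module.End.mul_apply, Module.End.mul_apply]
    exact hcomm_inner s t
  have htop' : (⨆ z : ℝ × ℝ,
      (Module.End.eigenspace Xop z.1 ⊓ Module.End.eigenspace Yop z.2)) = ⊤ := by
    rw [iSup_prod]
    exact LinearMap.IsSymmetric.iSup_iSup_eigenspace_inf_eigenspace_eq_top_of_commute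
      hXsym hYsym hcomm
  have h00n : (0:ℕ) + 0 ≤ n := by omega
  let uv : ∀ i j : ℕ, i + j ≤ n → ↥(lowDeg n) := fun i j h =>
    ⟨Pi.single (memb (n+1) i j (by omega)) 1, by
      intro q hq
      apply Pi.single_eq_of_ne
      intro hc
      rw [eq_memb_iff] at hc
      omega⟩
  let mono : ∀ i j : ℕ, i + j ≤ n → ↥E := fun i j h => ψ (uv i j h)
  have hmono_inner : ∀ i1 j1 h1 i2 j2 h2,
      (inner ℝ (mono i1 j1 h1) (mono i2 j2 h2) : ℝ) = β' (i1+i2) (j1+j2) := by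
    intro i1 j1 h1 i2 j2 h2
    rw [Submodule.coe_inner, hψcoe, hψcoe, hι_inner]
    show (Pi.single (memb (n+1) i1 j1 _) 1 : MIdx (n+1) → ℝ) ⬝ᵥ
      M.mulVec (Pi.single (memb (n+1) i2 j2 _) 1) = _
    rw [Matrix.mulVec_single, single_dot]
    show momentMatrix (n+1) β' _ _ * 1 = _
    rw [mul_one]
    rfl
  have hshift_single : ∀ (dx dy i j : ℕ) (h : i + j ≤ n) (hb : i + dx + (j + dy) ≤ n+1),
      (shiftM n dx dy).mulVec (↑(uv i j h) : MIdx (n+1) → ℝ)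
        = Pi.single (memb (n+1) (i+dx) (j+dy) hb) 1 := by
    intro dx dy i j h hb
    show (shiftM n dx dy).mulVec (Pi.single (memb (n+1) i j _) 1) = _
    rw [Matrix.mulVec_single]
    funext q
    rw [Pi.single_apply]
    show (if (q.1.1:ℕ) = (memb (n+1) i j _).1.1 + dx ∧ (q.1.2:ℕ) = (memb (n+1) i j _).1.2 + dy
      then (1:ℝ) else 0) * 1 = _
    rw [mul_one]
    simp only [memb_c1, memb_c2]
    by_cases hq : ((q.1.1:ℕ) = i + dx ∧ (q.1.2:ℕ) = j + dy)
    · rw [if_pos (eq_memb_iff.2 hq)]; exact if_pos hq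
    · rw [if_neg (fun hc => hq (eq_memb_iff.1 hc))]; exact if_neg hq
  have hstepX : ∀ i j (h : i + j ≤ n) (h' : i+1+j ≤ n),
      Xop (mono i j h) = mono (i+1) j h' := by
    intro i j h h'
    show Xop (ψ (uv i j h)) = _
    rw [hXψ]
    apply Subtype.ext
    rw [hφcoe, hψcoe]
    rw [hshift_single 1 0 i j h (by omega)]
    rfl
  have hstepY : ∀ i j (h : i + j ≤ n) (h' : i+(j+1) ≤ n),
      Yop (mono i j h) = mono i (j+1) h' := by
    intro i j h h'
    show Yop (ψ (uv i j h)) = _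
    rw [hYψ]
    apply Subtype.ext
    rw [hφcoe, hψcoe]
    rw [hshift_single 0 1 i j h (by omega)]
    rfl
  have hmono_pow : ∀ i j (h : i + j ≤ n),
      mono i j h = (Xop^i) ((Yop^j) (mono 0 0 h00n)) := by
    have hY : ∀ j (h : (0:ℕ) + j ≤ n), mono 0 j h = (Yop^j) (mono 0 0 h00n) := by
      intro j
      induction j with
      | zero => intro h; rw [pow_zero, Module.End.one_apply]
      | succ j ih =>
        intro h
        rw [pow_succ', Module.End.mul_apply, ← ih (by omega)]
        exact (hstepY 0 j (by omega) h).symm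
    intro i
    induction i with
    | zero => intro j h; rw [pow_zero, Module.End.one_apply]; exact hY j h
    | succ i ih =>
      intro j h
      rw [pow_succ', Module.End.mul_apply, ← ih j (by omega)]
      exact (hstepX i j (by omega) h).symm
  have hmem00 : mono 0 0 h00n ∈ ⨆ z : ℝ × ℝ,
      (Module.End.eigenspace Xop z.1 ⊓ Module.End.eigenspace Yop z.2) := by
    rw [htop']
    exact Submodule.mem_top
  obtain ⟨g, hgmem, hgsum⟩ := (Submodule.mem_iSup_iff_exists_finsupp _ _).1 hmem00
  have heigX : ∀ z : ℝ × ℝ, Xop (g z) = z.1 • g z :=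
    fun z => Module.End.mem_eigenspace_iff.1 (Submodule.mem_inf.1 (hgmem z)).1
  have heigY : ∀ z : ℝ × ℝ, Yop (g z) = z.2 • g z :=
    fun z => Module.End.mem_eigenspace_iff.1 (Submodule.mem_inf.1 (hgmem z)).2
  have hgsum' : ∑ z ∈ g.support, g z = mono 0 0 h00n := hgsum
  have hpow_act : ∀ s t : ℕ, (Xop^s) ((Yop^t) (mono 0 0 h00n))
      = ∑ z ∈ g.support, ((z.1^s * z.2^t) • g z) := by
    have hpowY : ∀ t (z : ℝ × ℝ), (Yop^t) (g z) = z.2^t • g z := by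
      intro t z
      induction t with
      | zero => rw [pow_zero, Module.End.one_apply, pow_zero, one_smul]
      | succ t ih =>
        rw [pow_succ', Module.End.mul_apply, ih, LinearMap.map_smul, heigY, smul_smul, ← pow_succ]
    have hpowX : ∀ s (z : ℝ × ℝ), (Xop^s) (g z) = z.1^s • g z := by
      intro s z
      induction s with
      | zero => rw [pow_zero, Module.End.one_apply, pow_zero, one_smul]
      | succ s ih =>
        rw [pow_succ', Module.End.mul_apply, ih, LinearMap.map_smul, heigX, smul_smul, ← pow_succ]
    intro s t
    rw [← hgsum', map_sum, map_sum]
    refine Finset.sum_congr rfl fun z _ => ?_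
    rw [hpowY, LinearMap.map_smul, hpowX, smul_smul, mul_comm]
  have horth : ∀ z w : ℝ × ℝ, z ≠ w → (inner ℝ (g z) (g w) : ℝ) = 0 := by
    intro z w hzw
    have hne : z.1 ≠ w.1 ∨ z.2 ≠ w.2 := by
      by_contra hc
      push_neg at hc
      exact hzw (Prod.ext hc.1 hc.2)
    rcases hne with hne | hne
    · have e1 : (inner ℝ (Xop (g z)) (g w) : ℝ) = inner ℝ (g z) (Xop (g w)) := hXsym _ _
      rw [heigX, heigX, real_inner_smul_left (F := ↥E), real_inner_smul_right (F := ↥E)] at e1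
      have h2 : (z.1 - w.1) * (inner ℝ (g z) (g w) : ℝ) = 0 := by
        rw [sub_mul, e1, sub_self]
      exact (mul_eq_zero.1 h2).resolve_left (sub_ne_zero.2 hne)
    · have e1 : (inner ℝ (Yop (g z)) (g w) : ℝ) = inner ℝ (g z) (Yop (g w)) := hYsym _ _
      rw [heigY, heigY, real_inner_smul_left (F := ↥E), real_inner_smul_right (F := ↥E)] at e1
      have h2 : (z.2 - w.2) * (inner ℝ (g z) (g w) : ℝ) = 0 := by
        rw [sub_mul, e1, sub_self]
      exact (mul_eq_zero.1 h2).resolve_left (sub_ne_zero.2 hne)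
  have hval : ∀ s t, s + t ≤ 2*n →
      β' s t = ∑ z ∈ g.support, (inner ℝ (g z) (g z) : ℝ) * z.1^s * z.2^t := by
    intro s t hst
    obtain ⟨s1, t1, s2, t2, hs, ht, hb1, hb2⟩ := split2 n s t hst
    rw [hs, ht, ← hmono_inner s1 t1 hb1 s2 t2 hb2, hmono_pow s1 t1 hb1, hmono_pow s2 t2 hb2,
      hpow_act s1 t1, hpow_act s2 t2, sum_inner]
    refine Finset.sum_congr rfl fun z hz => ?_
    rw [real_inner_smul_left (F := ↥E), inner_sum]
    rw [Finset.sum_eq_single_of_mem z hz (fun w _ hw => by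
      rw [real_inner_smul_right (F := ↥E), horth z w (Ne.symm hw), mul_zero])]
    rw [real_inner_smul_right (F := ↥E), pow_add, pow_add]
    ring
  have hsing : ∀ (p : MIdx (n+1)) (c : ℝ),
      c • (Pi.single p (1:ℝ) : MIdx (n+1) → ℝ) = Pi.single p c := by
    intro p c
    funext q
    simp only [Pi.smul_apply, Pi.single_apply, smul_eq_mul, mul_ite, mul_one, mul_zero]
  have hms : ∀ i j (h : i + j ≤ n),
      mono i j h ∈ Submodule.span ℝ (Set.range (fun z : ↥(g.support) => g ↑z)) := by
    intro i j h
    rw [hmono_pow i j h, hpow_act i j]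
    exact Submodule.sum_mem _ fun z hz =>
      Submodule.smul_mem _ _ (Submodule.subset_span ⟨⟨z, hz⟩, rfl⟩)
  have hspan : ⊤ ≤ Submodule.span ℝ (Set.range (fun z : ↥(g.support) => g ↑z)) := by
    intro u _
    obtain ⟨s, rfl⟩ := hψsurj u
    have hdec : ψ s = ∑ p : MIdx (n+1), (↑s : MIdx (n+1) → ℝ) p •
        (if h : (p.1.1:ℕ) + (p.1.2:ℕ) ≤ n then mono (p.1.1:ℕ) (p.1.2:ℕ) h else 0) := by
      apply Subtype.ext
      rw [hψcoe]
      rw [Submodule.coe_sum]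
      have hterm : ∀ p : MIdx (n+1), (((↑s : MIdx (n+1) → ℝ) p •
          (if h : (p.1.1:ℕ) + (p.1.2:ℕ) ≤ n then mono (p.1.1:ℕ) (p.1.2:ℕ) h else 0) : ↥E) :
            EuclideanSpace ℝ (MIdx (n+1)))
          = ι (Pi.single p ((↑s : MIdx (n+1) → ℝ) p)) := by
        intro p
        by_cases hp : (p.1.1:ℕ) + (p.1.2:ℕ) ≤ n
        · rw [dif_pos hp]
          have hcoe : ((mono (p.1.1:ℕ) (p.1.2:ℕ) hp : ↥E) : EuclideanSpace ℝ (MIdx (n+1)))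
              = ι (Pi.single p 1) := by
            rw [hψcoe]
            show ι (Pi.single (memb (n+1) (p.1.1:ℕ) (p.1.2:ℕ) _) 1) = _
            rw [memb_coords (n+1) p]
          rw [Submodule.coe_smul, hcoe, ← LinearMap.map_smul, hsing]
        · rw [dif_neg hp]
          have hz : (↑s : MIdx (n+1) → ℝ) p = 0 := s.2 p (by have := p.2; omega)
          rw [hz, zero_smul, Submodule.coe_zero, Pi.single_zero, map_zero]
      rw [Finset.sum_congr rfl fun p _ => hterm p, ← map_sum, Finset.univ_sum_single]
    rw [hdec]
    refine Submodule.sum_mem _ fun p _ => Submodule.smul_mem _ _ ?_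
    by_cases hp : (p.1.1:ℕ) + (p.1.2:ℕ) ≤ n
    · rw [dif_pos hp]; exact hms _ _ hp
    · rw [dif_neg hp]; exact Submodule.zero_mem _
  have hlin : LinearIndependent ℝ (fun z : ↥(g.support) => g ↑z) := by
    rw [Fintype.linearIndependent_iff]
    intro cv hcv i
    have h2 : (inner ℝ (∑ j : ↥(g.support), cv j • g ↑j) (g ↑i) : ℝ) = 0 := by
      rw [hcv, inner_zero_left]
    rw [sum_inner] at h2
    rw [Finset.sum_eq_single_of_mem i (Finset.mem_univ i) (fun j _ hj => by
      rw [real_inner_smul_left (F := ↥E), horth ↑j ↑i (fun hc => hj (Subtype.ext hc)), mul_zero])] at h2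
    rw [real_inner_smul_left (F := ↥E)] at h2
    have h4 : (inner ℝ (g ↑i) (g ↑i) : ℝ) ≠ 0 := by
      rw [Ne, inner_self_eq_zero]
      exact Finsupp.mem_support_iff.1 i.2
    exact (mul_eq_zero.1 h2).resolve_right h4
  have hcard : g.support.card = Module.finrank ℝ ↥E := by
    rw [Module.finrank_eq_card_basis (Module.Basis.mk hlin hspan), Fintype.card_coe]
  have hfr : Module.finrank ℝ ↥E = (momentMatrix n β).rank := by
    have h1 : E = Submodule.map
        ((WithLp.linearEquiv 2 ℝ (MIdx (n+1) → ℝ)).symm.toLinearMap)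
        (LinearMap.range A.mulVecLin) := by
      rw [hE]
      exact LinearMap.range_comp _ _
    rw [h1, LinearEquiv.finrank_map_eq]
    have hkereq : LinearMap.ker (A.mulVecLin) = LinearMap.ker (M.mulVecLin) := by
      ext f
      simp only [LinearMap.mem_ker, Matrix.mulVecLin_apply]
      exact hkerAM f
    have r1 := LinearMap.finrank_range_add_finrank_ker (A.mulVecLin)
    have r2 := LinearMap.finrank_range_add_finrank_ker (M.mulVecLin)
    rw [hkereq] at r1
    have h2 : Module.finrank ℝ ↥(LinearMap.range A.mulVecLin)
        = Module.finrank ℝ ↥(LinearMap.range M.mulVecLin) := by omega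
    rw [h2]
    exact hrank
  have hrT : (momentMatrix n β).rank = g.support.card := by rw [hcard, hfr]
  let ez : Fin ((momentMatrix n β).rank) ≃ ↥(g.support) :=
    (finCongr hrT).trans g.support.equivFin.symm
  refine ⟨fun k => ↑(ez k), fun k => (inner ℝ (g ↑(ez k)) (g ↑(ez k)) : ℝ), ?_, ?_, ?_⟩
  · intro k l hkl
    exact ez.injective (Subtype.ext hkl)
  · intro k
    have h4 : (inner ℝ (g ↑(ez k)) (g ↑(ez k)) : ℝ) ≠ 0 := by
      rw [Ne, inner_self_eq_zero]
      exact Finsupp.mem_support_iff.1 (ez k).2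
    exact lt_of_le_of_ne real_inner_self_nonneg (Ne.symm h4)
  · intro s t hst
    rw [← hag s t hst, hval s t hst, ← Finset.sum_coe_sort g.support]
    exact (Equiv.sum_comp ez (fun i : ↥(g.support) =>
      (inner ℝ (g ↑i) (g ↑i) : ℝ) * (↑i : ℝ × ℝ).1^s * (↑i : ℝ × ℝ).2^t)).symm





lemma main_forward (n : ℕ) (β : ℕ → ℕ → ℝ) (K : Set (ℝ × ℝ)) (μ : Measure (ℝ × ℝ))
    (h1 : IsRepMeasure (2*n) β K μ) (h2 : IsAtomicMeasure ((momentMatrix n β).rank) μ) :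
    HasFlatExtension n β := by
  obtain ⟨x, c, hinj, hcpos, hμ⟩ := h2
  have hmeas : ∀ i j : ℕ, Measurable (fun w : ℝ × ℝ => w.1 ^ i * w.2 ^ j) := fun i j =>
    (measurable_fst.pow_const i).mul (measurable_snd.pow_const j)
  have hmono : ∀ i j, i + j ≤ 2*n → β i j = ∑ k, c k * (x k).1 ^ i * (x k).2 ^ j := by
    intro i j h
    rw [(h1.2 i j h).2, hμ, atomic_integral x c (fun k => (hcpos k).le) (hmeas i j)]
    exact Finset.sum_congr rfl fun k _ => by ring
  refine ⟨fun s t => ∑ k, c k * (x k).1 ^ s * (x k).2 ^ t,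
    fun i j h => (hmono i j h).symm,
    psd_atomic (fun k => (hcpos k).le) (fun s t _ => rfl),
    le_antisymm (rank_atomic_le (fun k => (hcpos k).le) (fun s t => rfl))
      (rank_le_of_agree n β _ (fun i j h => (hmono i j h).symm))⟩

theorem atomicRepMeasure_iff_flatExtension (n : ℕ) (hn : 3 ≤ n) (a b : ℝ) (β : ℕ → ℕ → ℝ)
    (hpsd : (momentMatrix n β).PosSemidef) (hpure : IsPPure n a b β) :
    (∃ μ : Measure (ℝ × ℝ),
        IsRepMeasure (2*n) β {z : ℝ × ℝ | z.2^2 - z.1^3 - a * z.1 - b = 0} μ ∧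
        IsAtomicMeasure ((momentMatrix n β).rank) μ) ↔
      HasFlatExtension n β := by
  constructor
  · rintro ⟨μ, h1, h2⟩
    exact main_forward n β _ μ h1 h2
  · rintro ⟨β', hag, hpsd', hrank⟩
    obtain ⟨z, c, hinj, hcpos, hrep⟩ := flat_rep n β β' hag hpsd' hrank
    have hmeas : ∀ i j : ℕ, Measurable (fun w : ℝ × ℝ => w.1 ^ i * w.2 ^ j) := fun i j =>
      (measurable_fst.pow_const i).mul (measurable_snd.pow_const j)
    -- the atoms lie on the curve
    have hw : (momentMatrix n β).mulVec (pureVec n a b 0 0) = 0 := by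
      have hmem : pureVec n a b 0 0 ∈ {v : MIdx n → ℝ | (momentMatrix n β).mulVec v = 0} := by
        rw [hpure]
        exact Submodule.subset_span ⟨0, 0, by omega, rfl⟩
      exact hmem
    have hquad := quad_form (m := n) (γ := β) hrep (pureVec n a b 0 0)
    rw [hw, dotProduct_zero] at hquad
    have hev : ∀ k, (∑ p : MIdx n,
        pureVec n a b 0 0 p * (z k).1 ^ (p.1.1:ℕ) * (z k).2 ^ (p.1.2:ℕ)) = 0 := by
      intro k
      have hz := (Finset.sum_eq_zero_iff_of_nonneg
        (fun k _ => mul_nonneg (hcpos k).le (sq_nonneg _))).1 hquad.symm k (Finset.mem_univ k)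
      have := mul_eq_zero.1 hz
      rcases this with h | h
      · exact absurd h (ne_of_gt (hcpos k))
      · exact pow_eq_zero_iff (by norm_num) |>.1 h
    have hcurve : ∀ k, (z k).2^2 - (z k).1^3 - a * (z k).1 - b = 0 := by
      intro k
      have he := hev k
      have hexp : ∀ p : MIdx n,
          pureVec n a b 0 0 p * (z k).1 ^ (p.1.1:ℕ) * (z k).2 ^ (p.1.2:ℕ)
            = (if (p.1.1:ℕ) = 0 ∧ (p.1.2:ℕ) = 0 + 2 then (1:ℝ) else 0) *
                ((z k).1 ^ (p.1.1:ℕ) * (z k).2 ^ (p.1.2:ℕ))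
              - (if (p.1.1:ℕ) = 0 + 3 ∧ (p.1.2:ℕ) = 0 then (1:ℝ) else 0) *
                ((z k).1 ^ (p.1.1:ℕ) * (z k).2 ^ (p.1.2:ℕ))
              - a * ((if (p.1.1:ℕ) = 0 + 1 ∧ (p.1.2:ℕ) = 0 then (1:ℝ) else 0) *
                ((z k).1 ^ (p.1.1:ℕ) * (z k).2 ^ (p.1.2:ℕ)))
              - b * ((if (p.1.1:ℕ) = 0 ∧ (p.1.2:ℕ) = 0 then (1:ℝ) else 0) *
                ((z k).1 ^ (p.1.1:ℕ) * (z k).2 ^ (p.1.2:ℕ))) := by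
        intro p
        rw [pureVec]
        ring
      rw [Finset.sum_congr rfl fun p _ => hexp p] at he
      rw [Finset.sum_sub_distrib, Finset.sum_sub_distrib, Finset.sum_sub_distrib,
        ← Finset.mul_sum, ← Finset.mul_sum] at he
      rw [sum_ite_mul_of_le (by omega : 0 + (0 + 2) ≤ n), sum_ite_mul_of_le (by omega : 0 + 3 + 0 ≤ n),
        sum_ite_mul_of_le (by omega : 0 + 1 + 0 ≤ n), sum_ite_mul_of_le (by omega : 0 + 0 ≤ n)] at he
      simp only [memb_c1, memb_c2] at he
      norm_num at he
      linarith [he]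
    refine ⟨∑ k, ENNReal.ofReal (c k) • Measure.dirac (z k), ⟨?_, ?_⟩,
      ⟨z, c, hinj, hcpos, rfl⟩⟩
    · have hKmeas : MeasurableSet {w : ℝ × ℝ | w.2^2 - w.1^3 - a * w.1 - b = 0} := by
        have : {w : ℝ × ℝ | w.2^2 - w.1^3 - a * w.1 - b = 0}
            = (fun w : ℝ × ℝ => w.2^2 - w.1^3 - a * w.1 - b) ⁻¹' {0} := rfl
        rw [this]
        exact (((((continuous_snd.pow 2).sub (continuous_fst.pow 3)).sub
          ((continuous_const.mul continuous_fst))).sub continuous_const)).measurable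
          (measurableSet_singleton 0)
      exact atomic_compl z c hKmeas hcurve
    · intro i j hij
      refine ⟨atomic_integrable z c (hmeas i j), ?_⟩
      rw [atomic_integral z c (fun k => (hcpos k).le) (hmeas i j), hrep i j hij]
      exact Finset.sum_congr rfl fun k _ => by ring

end
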